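/- Let 0<q<1, 0 ≤ α ≤ β, n ≥ 1, φ : ℝ → ℝ and x ≥ 0. Assume w_k(x) ≥ 0 for all k ≥ 0, ∑_{k=0}^∞ w_k(x) = 1, and that the series ∑_{k=0}^∞ w_k(x)·([k]_q + q^{k-1}α)/(q^{k-1}([n]_q + β)) converges and equals [n]_q x/([n]_q + β) + α/([n]_q + β). Then L*_n(e_1; q, x) = [n]_q x/([n]_q + β) + q(1 + 2α)/([2]_q ([n]_q + β)), where e_1(t) = t. -/

import Mathlib

open scoped BigOperators

noncomputable section

/-- The `q`-integer `[n]_q = ∑_{i=0}^{n-1} q^i`. -/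
def qInt (q : ℝ) (n : ℕ) : ℝ := ∑ i ∈ Finset.range n, q ^ i

/-- The `q`-factorial `[n]_q! = ∏_{j=1}^{n} [j]_q`. -/
def qFact (q : ℝ) (n : ℕ) : ℝ := ∏ j ∈ Finset.range n, qInt q (j + 1)

/-- The `q`-Jackson integral `∫_0^c g(t) d_q t = (1-q) c ∑_{j=0}^∞ q^j g (c q^j)`. -/
def jackson0 (q c : ℝ) (g : ℝ → ℝ) : ℝ := (1 - q) * c * ∑' j : ℕ, q ^ j * g (c * q ^ j)

/-- The `q`-Jackson integral `∫_a^b g(t) d_q t`. -/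
def jackson (q a b : ℝ) (g : ℝ → ℝ) : ℝ := jackson0 q b g - jackson0 q a g

/-- The `q`-derivative operator, with the convention `(D_q g)(0) = 0`. -/
def qD (q : ℝ) (g : ℝ → ℝ) : ℝ → ℝ := fun x =>
  if x = 0 then 0 else (g x - g (q * x)) / ((1 - q) * x)

/-- The weights `w_k(x) = q^{k(k-1)/2} (D_q^k φ)(x) (−x)^k / [k]_q!`. -/
def w (q : ℝ) (φ : ℝ → ℝ) (k : ℕ) (x : ℝ) : ℝ :=
  q ^ (k * (k - 1) / 2) * ((qD q)^[k] φ) x * (-x) ^ k / qFact q k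

/-- Lower node `a_k = q([k]_q + q^{k-1} α)/([n]_q + β)`. -/
def aNode (q α β : ℝ) (n k : ℕ) : ℝ :=
  q * (qInt q k + q ^ ((k : ℤ) - 1) * α) / (qInt q n + β)

/-- Upper node `b_k = ([k+1]_q + q^k α)/([n]_q + β)`. -/
def bNode (q α β : ℝ) (n k : ℕ) : ℝ :=
  (qInt q (k + 1) + q ^ k * α) / (qInt q n + β)

/-- The Stancu type `q`-Baskakov–Kantorovich operator
`L*_n(f; q, x) = ([n]_q + β) ∑_{k=0}^∞ w_k(x) ∫_{a_k}^{b_k} f(q^{1-k} t) d_q t`. -/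
def Lop (q α β : ℝ) (n : ℕ) (φ : ℝ → ℝ) (f : ℝ → ℝ) (x : ℝ) : ℝ :=
  (qInt q n + β) * ∑' k : ℕ, w q φ k x *
    jackson q (aNode q α β n k) (bNode q α β n k) (fun t => f (q ^ (1 - (k : ℤ)) * t))

/-- The moment identities (M) at `x` with parameter `m`. -/
def MomentM (q α β : ℝ) (n m : ℕ) (φ : ℝ → ℝ) (x : ℝ) : Prop :=
  Lop q α β n φ (fun _ => 1) x = 1 ∧
  Lop q α β n φ (fun t => t) x =
    qInt q n * x / (qInt q n + β) + q * (1 + 2 * α) / (qInt q 2 * (qInt q n + β)) ∧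
  Lop q α β n φ (fun t => t ^ 2) x =
    qInt q n * qInt q m * x ^ 2 / (q * (qInt q n + β) ^ 2)
      + qInt q n * (qInt q 3 + q * ((1 + 3 * α) * qInt q 2 + 1)) * x
          / (qInt q 3 * (qInt q n + β) ^ 2)
      + q ^ 2 * (1 + 3 * α + 3 * α ^ 2) / (qInt q 3 * (qInt q n + β) ^ 2)

/-- The quantity `δ_n(x)`. -/
def deltaN (q α β : ℝ) (n m : ℕ) (x : ℝ) : ℝ :=
  (qInt q n * qInt q m / (q * (qInt q n + β) ^ 2) + 1 - 2 * qInt q n / (qInt q n + β)) * x ^ 2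
  + (qInt q n * (qInt q 3 + q * ((1 + 3 * α) * qInt q 2 + 1))
        / (qInt q 3 * (qInt q n + β) ^ 2)
      - 2 * q * (1 + 2 * α) / (qInt q 2 * (qInt q n + β))) * x
  + q ^ 2 * (1 + 3 * α + 3 * α ^ 2) / (qInt q 3 * (qInt q n + β) ^ 2)

open scoped Classical in
/-- Statistical convergence of a real sequence. -/
def StatLim (x : ℕ → ℝ) (L : ℝ) : Prop :=
  ∀ ε > 0, Filter.Tendsto
    (fun n => (((Finset.range n).filter (fun j => ε ≤ |x j - L|)).card : ℝ) / n)
    Filter.atTop (nhds 0)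

open scoped Classical in
/-- Statistical convergence of a real double sequence. -/
def StatLim2 (x : ℕ → ℕ → ℝ) (L : ℝ) : Prop :=
  ∀ ε > 0, Filter.Tendsto
    (fun p : ℕ × ℕ =>
      (((Finset.range p.1 ×ˢ Finset.range p.2).filter
          (fun jk => ε ≤ |x jk.1 jk.2 - L|)).card : ℝ) / (p.1 * p.2))
    Filter.atTop (nhds 0)

/-- Condition (d) on a sequence `(q_n) ⊂ (0,1)`. -/
def CondD (q : ℕ → ℝ) : Prop :=
  StatLim q 1 ∧ (∃ a < (1 : ℝ), StatLim (fun n => q n ^ n) a) ∧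
    StatLim (fun n => 1 / qInt (q n) n) 0

/-- Modulus of continuity on `[0,∞)`. -/
def omegaMod (f : ℝ → ℝ) (δ : ℝ) : ℝ :=
  sSup {d | ∃ t s : ℝ, 0 ≤ t ∧ 0 ≤ s ∧ |t - s| ≤ δ ∧ d = |f t - f s|}

/-- Bivariate modulus of continuity on `[0,∞) × [0,∞)`. -/
def omegaMod2 (f : ℝ → ℝ → ℝ) (δ₁ δ₂ : ℝ) : ℝ :=
  sSup {d | ∃ x' y' x y : ℝ, 0 ≤ x' ∧ 0 ≤ y' ∧ 0 ≤ x ∧ 0 ≤ y ∧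
    |x' - x| ≤ δ₁ ∧ |y' - y| ≤ δ₂ ∧ d = |f x' y' - f x y|}

/-- The bivariate Stancu type `q`-Baskakov–Kantorovich operator. -/
def Lop2 (q₁ q₂ α β : ℝ) (n₁ n₂ : ℕ) (φ₁ φ₂ : ℝ → ℝ) (f : ℝ → ℝ → ℝ) (x y : ℝ) : ℝ :=
  (qInt q₁ n₁ + β) * (qInt q₂ n₂ + β) *
    ∑' k₁ : ℕ, ∑' k₂ : ℕ, w q₁ φ₁ k₁ x * w q₂ φ₂ k₂ y *
      jackson q₁ (aNode q₁ α β n₁ k₁) (bNode q₁ α β n₁ k₁) (fun t =>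
        jackson q₂ (aNode q₂ α β n₂ k₂) (bNode q₂ α β n₂ k₂) (fun s =>
          f (q₁ ^ (1 - (k₁ : ℤ)) * t) (q₂ ^ (1 - (k₂ : ℤ)) * s)))

theorem stmt5 (q α β : ℝ) (hq0 : 0 < q) (hq1 : q < 1) (hα : 0 ≤ α) (hαβ : α ≤ β)
    (n : ℕ) (hn : 1 ≤ n) (φ : ℝ → ℝ) (x : ℝ) (hx : 0 ≤ x)
    (hw : ∀ k, 0 ≤ w q φ k x)
    (hsum : HasSum (fun k => w q φ k x) 1)
    (hsum1 : HasSum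
      (fun k => w q φ k x * ((qInt q k + q ^ ((k : ℤ) - 1) * α) /
        (q ^ ((k : ℤ) - 1) * (qInt q n + β))))
      (qInt q n * x / (qInt q n + β) + α / (qInt q n + β))) :
    Lop q α β n φ (fun t => t) x =
      qInt q n * x / (qInt q n + β) + q * (1 + 2 * α) / (qInt q 2 * (qInt q n + β)) := by
  have hqne : q ≠ 0 := hq0.ne'
  have h1q : (1:ℝ) - q ≠ 0 := by linarith
  have h1q' : (1:ℝ) + q ≠ 0 := by positivity
  have hqn : 0 < qInt q n := by
    have : (0:ℝ) < ∑ i ∈ Finset.range n, q ^ i := by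
      apply Finset.sum_pos (fun i _ => pow_pos hq0 i)
      exact Finset.nonempty_range_iff.mpr (by omega)
    simpa [qInt] using this
  have hD : 0 < qInt q n + β := by linarith
  have hDne : qInt q n + β ≠ 0 := hD.ne'
  have hj0 : ∀ A c : ℝ, jackson0 q c (fun t => A * t) = A * c ^ 2 / (1 + q) := by
    intro A c
    have hgeo : ∑' j : ℕ, (q ^ 2) ^ j = (1 - q ^ 2)⁻¹ :=
      tsum_geometric_of_lt_one (by positivity) (by nlinarith)
    have hs : ∑' j : ℕ, q ^ j * (A * (c * q ^ j)) = A * c * (1 - q ^ 2)⁻¹ := by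
      calc ∑' j : ℕ, q ^ j * (A * (c * q ^ j)) = ∑' j : ℕ, A * c * (q ^ 2) ^ j := by
            congr 1; funext j; ring
        _ = A * c * ∑' j : ℕ, (q ^ 2) ^ j := tsum_mul_left
        _ = A * c * (1 - q ^ 2)⁻¹ := by rw [hgeo]
    unfold jackson0
    rw [hs, show (1:ℝ) - q ^ 2 = (1 - q) * (1 + q) by ring]
    field_simp
  have hjack : ∀ A a b : ℝ, jackson q a b (fun t => A * t) = A * (b ^ 2 - a ^ 2) / (1 + q) := by
    intro A a b
    unfold jackson
    rw [hj0, hj0]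
    ring
  set D := qInt q n + β with hDdef
  set c2 : ℝ := (q + q * α - α) / (D ^ 2 * (1 + q)) with hc2
  have key : ∀ k : ℕ, w q φ k x *
      jackson q (aNode q α β n k) (bNode q α β n k) (fun t => q ^ (1 - (k : ℤ)) * t)
      = (1 / D) * (w q φ k x * ((qInt q k + q ^ ((k : ℤ) - 1) * α) /
          (q ^ ((k : ℤ) - 1) * D))) + c2 * w q φ k x := by
    intro k
    rw [hjack]
    have hP : (q : ℝ) ^ ((k : ℤ) - 1) = q ^ k / q := by
      rw [zpow_sub₀ hqne, zpow_natCast, zpow_one]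
    have hP1 : (q : ℝ) ^ (1 - (k : ℤ)) = q / q ^ k := by
      rw [zpow_sub₀ hqne, zpow_natCast, zpow_one]
    have hk : qInt q k = (q ^ k - 1) / (q - 1) := geom_sum_eq (by linarith) k
    have hk1 : qInt q (k + 1) = (q ^ (k + 1) - 1) / (q - 1) := geom_sum_eq (by linarith) (k + 1)
    have hPk : (q : ℝ) ^ k ≠ 0 := pow_ne_zero _ hqne
    have hq1' : q - 1 ≠ 0 := by linarith
    unfold aNode bNode
    rw [hk, hk1, hP, hP1, hc2, ← hDdef]
    field_simp
    ring
  have h2 : HasSum (fun k => (1 / D) * (w q φ k x * ((qInt q k + q ^ ((k : ℤ) - 1) * α) /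
        (q ^ ((k : ℤ) - 1) * D))) + c2 * w q φ k x)
      ((1 / D) * (qInt q n * x / D + α / D) + c2 * 1) :=
    (hsum1.mul_left _).add (hsum.mul_left _)
  rw [show (fun k => (1 / D) * (w q φ k x * ((qInt q k + q ^ ((k : ℤ) - 1) * α) /
        (q ^ ((k : ℤ) - 1) * D))) + c2 * w q φ k x)
      = (fun k => w q φ k x *
        jackson q (aNode q α β n k) (bNode q α β n k) (fun t => q ^ (1 - (k : ℤ)) * t))
      from funext fun k => (key k).symm] at h2
  have hq2 : qInt q 2 = 1 + q := by simp [qInt, Finset.sum_range_succ]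
  unfold Lop
  rw [h2.tsum_eq, hq2, hc2, ← hDdef]
  field_simp
  ring

end
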